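/- No PPT measurement can perfectly distinguish the four states ψ₀⊗ψ₀, ψ₁⊗ψ₃, ψ₂⊗ψ₃, ψ₃⊗ψ₃ on ℂ⁴⊗ℂ⁴: for any PPT operators P₁,…,P₄ summing to the identity, (1/4)·Σⱼ ⟨Pⱼ, ρⱼ⟩ ≤ 7/8 < 1. -/

import Mathlib

open Matrix

noncomputable def pauli : Fin 4 → Matrix (Fin 2) (Fin 2) ℂ
  | 0 => 1
  | 1 => !![0, 1; 1, 0]
  | 2 => !![0, -Complex.I; Complex.I, 0]
  | 3 => !![1, 0; 0, -1]

/-- Density operator of the Bell state `|ψᵢ⟩ = (1 ⊗ σᵢ)|ψ₀⟩`,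
`|ψ₀⟩ = (|00⟩+|11⟩)/√2`, as a matrix on `ℂ² ⊗ ℂ²`. -/
noncomputable def bell (i : Fin 4) :
    Matrix (Fin 2 × Fin 2) (Fin 2 × Fin 2) ℂ :=
  fun p q => (1 / 2 : ℂ) * pauli i p.2 p.1 * (starRingEnd ℂ) (pauli i q.2 q.1)

/-- Partial transpose on the first tensor factor. -/
def PT {d : ℕ} (X : Matrix (Fin d × Fin d) (Fin d × Fin d) ℂ) :
    Matrix (Fin d × Fin d) (Fin d × Fin d) ℂ :=
  fun p q => X (q.1, p.2) (p.1, q.2)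

open Kronecker
open scoped ComplexOrder

/-- Partial transpose on both of Alice's qubits, acting factorwise on
`(ℂ²⊗ℂ²) ⊗ (ℂ²⊗ℂ²)`. -/
def PT2 (X : Matrix ((Fin 2 × Fin 2) × (Fin 2 × Fin 2))
    ((Fin 2 × Fin 2) × (Fin 2 × Fin 2)) ℂ) :
    Matrix ((Fin 2 × Fin 2) × (Fin 2 × Fin 2)) ((Fin 2 × Fin 2) × (Fin 2 × Fin 2)) ℂ :=
  fun p q => X ((q.1.1, p.1.2), (q.2.1, p.2.2)) ((p.1.1, q.1.2), (p.2.1, q.2.2))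

/-- The four states of Yu–Duan–Ying's example. -/
noncomputable def ydy : Fin 4 → Matrix ((Fin 2 × Fin 2) × (Fin 2 × Fin 2))
    ((Fin 2 × Fin 2) × (Fin 2 × Fin 2)) ℂ
  | 0 => bell 0 ⊗ₖ bell 0
  | 1 => bell 1 ⊗ₖ bell 3
  | 2 => bell 2 ⊗ₖ bell 3
  | 3 => bell 3 ⊗ₖ bell 3

/-! ### Auxiliary material -/

section Aux

set_option linter.unnecessarySeqFocus false

abbrev QI := Fin 2 × Fin 2
abbrev II := QI × QI

/-- The Bell vector as a column matrix (unnormalized). -/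
noncomputable def kvec (i : Fin 4) : Matrix QI (Fin 1) ℂ := fun p _ => pauli i p.2 p.1

lemma bell_eq (i : Fin 4) : bell i = (1/2 : ℂ) • (kvec i * (kvec i)ᴴ) := by
  ext p q
  simp [bell, kvec, Matrix.mul_apply, Matrix.conjTranspose_apply]
  ring

lemma kvec_inner_self (i : Fin 4) : (kvec i)ᴴ * kvec i = (2:ℂ) • 1 := by
  fin_cases i <;>
  · ext a b
    fin_cases a <;> fin_cases b <;>
      norm_num [kvec, pauli, Matrix.mul_apply, Fintype.sum_prod_type, Fin.sum_univ_two,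
        Matrix.conjTranspose_apply, Matrix.one_apply, Complex.ext_iff]

lemma kvec_inner_orth (i j : Fin 4) (hij : i ≠ j) : (kvec i)ᴴ * kvec j = 0 := by
  fin_cases i <;> fin_cases j <;>
    first
      | exact absurd rfl hij
      | (ext a b
         fin_cases a <;> fin_cases b <;>
           norm_num [kvec, pauli, Matrix.mul_apply, Fintype.sum_prod_type, Fin.sum_univ_two,
             Matrix.conjTranspose_apply, Complex.ext_iff])

lemma bell_mul_self (i : Fin 4) : bell i * bell i = bell i := by
  rw [bell_eq]
  rw [smul_mul_assoc, mul_smul_comm, smul_smul]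
  have h : kvec i * (kvec i)ᴴ * (kvec i * (kvec i)ᴴ) = (2:ℂ) • (kvec i * (kvec i)ᴴ) := by
    calc kvec i * (kvec i)ᴴ * (kvec i * (kvec i)ᴴ)
        = kvec i * ((kvec i)ᴴ * kvec i) * (kvec i)ᴴ := by
          rw [Matrix.mul_assoc, Matrix.mul_assoc, Matrix.mul_assoc]
      _ = (2:ℂ) • (kvec i * (kvec i)ᴴ) := by
          rw [kvec_inner_self, Matrix.mul_smul, Matrix.mul_one, Matrix.smul_mul]
  rw [h, smul_smul]
  norm_num

lemma bell_mul_orth (i j : Fin 4) (hij : i ≠ j) : bell i * bell j = 0 := by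
  rw [bell_eq, bell_eq]
  rw [smul_mul_assoc, mul_smul_comm, smul_smul]
  have h : kvec i * (kvec i)ᴴ * (kvec j * (kvec j)ᴴ) = 0 := by
    calc kvec i * (kvec i)ᴴ * (kvec j * (kvec j)ᴴ)
        = kvec i * ((kvec i)ᴴ * kvec j) * (kvec j)ᴴ := by
          rw [Matrix.mul_assoc, Matrix.mul_assoc, Matrix.mul_assoc]
      _ = 0 := by rw [kvec_inner_orth i j hij, Matrix.mul_zero, Matrix.zero_mul]
  rw [h, smul_zero]

lemma bell_herm (i : Fin 4) : (bell i)ᴴ = bell i := by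
  rw [bell_eq, conjTranspose_smul, conjTranspose_mul, conjTranspose_conjTranspose]
  congr 1
  simp [Complex.ext_iff]

lemma trace_bell (i : Fin 4) : (bell i).trace = 1 := by
  rw [bell_eq, trace_smul, Matrix.trace_mul_comm, kvec_inner_self, trace_smul, trace_one]
  simp

/-- positive semidefiniteness from hermitian idempotent -/
lemma psd_of_proj {n : Type*} [Fintype n] {M : Matrix n n ℂ} (h1 : Mᴴ = M)
    (h2 : M * M = M) : M.PosSemidef := by
  have h : M = Mᴴ * M := by rw [h1, h2]
  rw [h]
  exact Matrix.posSemidef_conjTranspose_mul_self M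

lemma bell_psd (i : Fin 4) : (bell i).PosSemidef :=
  psd_of_proj (bell_herm i) (bell_mul_self i)

lemma one_sub_sub_psd {n : Type*} [Fintype n] [DecidableEq n] {A B : Matrix n n ℂ}
    (hA : Aᴴ = A) (hB : Bᴴ = B) (hAA : A * A = A) (hBB : B * B = B)
    (hAB : A * B = 0) (hBA : B * A = 0) : ((1 : Matrix n n ℂ) - A - B).PosSemidef := by
  refine psd_of_proj (by simp [conjTranspose_sub, hA, hB]) ?_
  simp only [sub_mul, mul_sub, one_mul, mul_one, hAA, hBB, hAB, hBA, sub_zero]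
  abel

lemma one_sub_bell_psd (i : Fin 4) : ((1 : Matrix QI QI ℂ) - bell i).PosSemidef := by
  have h := one_sub_sub_psd (bell_herm i) (B := 0) (by simp) (bell_mul_self i)
    (by simp) (by simp) (by simp)
  simpa using h

lemma one_sub_bell_sub_bell_psd (i j : Fin 4) (hij : i ≠ j) :
    ((1 : Matrix QI QI ℂ) - bell i - bell j).PosSemidef :=
  one_sub_sub_psd (bell_herm i) (bell_herm j) (bell_mul_self i) (bell_mul_self j)
    (bell_mul_orth i j hij) (bell_mul_orth j i hij.symm)

lemma psd_smul {n : Type*} [Fintype n] {M : Matrix n n ℂ} (hM : M.PosSemidef)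
    {c : ℂ} (hc : 0 ≤ c) : (c • M).PosSemidef := by
  have hre : (starRingEnd ℂ) c = c := by
    rw [Complex.le_def] at hc
    exact Complex.conj_eq_iff_im.mpr hc.2.symm
  refine Matrix.PosSemidef.of_dotProduct_mulVec_nonneg ?_ ?_
  · show (c • M)ᴴ = c • M
    rw [conjTranspose_smul, hM.1.eq]
    congr 1
  · intro x
    rw [smul_mulVec, dotProduct_smul, smul_eq_mul]
    exact mul_nonneg hc (hM.dotProduct_mulVec_nonneg x)

lemma kron_conjTranspose {n m : Type*} [Fintype n] [Fintype m]
    (X : Matrix n n ℂ) (Y : Matrix m m ℂ) : (X ⊗ₖ Y)ᴴ = Xᴴ ⊗ₖ Yᴴ := by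
  ext p q
  simp [Matrix.conjTranspose_apply, mul_comm]

lemma kron_psd {n m : Type*} [Fintype n] [Fintype m] [DecidableEq n] [DecidableEq m]
    {A : Matrix n n ℂ} {B : Matrix m m ℂ}
    (hA : A.PosSemidef) (hB : B.PosSemidef) : (A ⊗ₖ B).PosSemidef := by
  obtain ⟨C, hC⟩ : ∃ C : Matrix _ _ ℂ, A = Cᴴ * C := by
    open scoped MatrixOrder in
    obtain ⟨C, hC⟩ := CStarAlgebra.nonneg_iff_eq_star_mul_self.mp hA.nonneg
    exact ⟨C, hC⟩
  obtain ⟨D, hD⟩ : ∃ D : Matrix _ _ ℂ, B = Dᴴ * D := by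
    open scoped MatrixOrder in
    obtain ⟨D, hD⟩ := CStarAlgebra.nonneg_iff_eq_star_mul_self.mp hB.nonneg
    exact ⟨D, hD⟩
  rw [hC, hD, Matrix.mul_kronecker_mul, ← kron_conjTranspose]
  exact Matrix.posSemidef_conjTranspose_mul_self _

lemma sub_kron {n m : Type*} (A B : Matrix n n ℂ) (C : Matrix m m ℂ) :
    (A - B) ⊗ₖ C = A ⊗ₖ C - B ⊗ₖ C := by
  ext p q
  simp [sub_mul]

lemma kron_sub {n m : Type*} (A : Matrix n n ℂ) (B C : Matrix m m ℂ) :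
    A ⊗ₖ (B - C) = A ⊗ₖ B - A ⊗ₖ C := by
  ext p q
  simp [mul_sub]

/-- partial transposes of the Bell states -/
lemma PT_bell0 : PT (bell 0) = (1/2 : ℂ) • 1 - bell 2 := by
  ext ⟨a,b⟩ ⟨c,d⟩
  fin_cases a <;> fin_cases b <;> fin_cases c <;> fin_cases d <;>
    norm_num [PT, bell, pauli, Matrix.one_apply, Complex.ext_iff, Prod.ext_iff]

lemma PT_bell1 : PT (bell 1) = (1/2 : ℂ) • 1 - bell 3 := by
  ext ⟨a,b⟩ ⟨c,d⟩
  fin_cases a <;> fin_cases b <;> fin_cases c <;> fin_cases d <;>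
    norm_num [PT, bell, pauli, Matrix.one_apply, Complex.ext_iff, Prod.ext_iff]

lemma PT_bell2 : PT (bell 2) = (1/2 : ℂ) • 1 - bell 0 := by
  ext ⟨a,b⟩ ⟨c,d⟩
  fin_cases a <;> fin_cases b <;> fin_cases c <;> fin_cases d <;>
    norm_num [PT, bell, pauli, Matrix.one_apply, Complex.ext_iff, Prod.ext_iff]

lemma PT_bell3 : PT (bell 3) = (1/2 : ℂ) • 1 - bell 1 := by
  ext ⟨a,b⟩ ⟨c,d⟩
  fin_cases a <;> fin_cases b <;> fin_cases c <;> fin_cases d <;>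
    norm_num [PT, bell, pauli, Matrix.one_apply, Complex.ext_iff, Prod.ext_iff]

lemma PT2_kron (X Y : Matrix QI QI ℂ) : PT2 (X ⊗ₖ Y) = PT X ⊗ₖ PT Y := rfl

lemma PT2_one : PT2 (1 : Matrix II II ℂ) = 1 := by
  ext p q
  simp only [PT2, Matrix.one_apply, Prod.ext_iff]
  by_cases h1 : p.1.1 = q.1.1 <;> by_cases h2 : p.1.2 = q.1.2 <;>
    by_cases h3 : p.2.1 = q.2.1 <;> by_cases h4 : p.2.2 = q.2.2 <;>
      simp [h1, h2, h3, h4, eq_comm]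

lemma PT2_sum (P : Fin 4 → Matrix II II ℂ) : ∑ j, PT2 (P j) = PT2 (∑ j, P j) := by
  ext p q
  simp [PT2, Matrix.sum_apply]

lemma trace_PT2_mul (A B : Matrix II II ℂ) :
    ((PT2 A) * (PT2 B)).trace = (A * B).trace := by
  have hform : ∀ (M N : Matrix II II ℂ),
      (M * N).trace = ∑ x : II × II, M x.1 x.2 * N x.2 x.1 := by
    intro M N
    rw [Fintype.sum_prod_type]
    simp [Matrix.trace, Matrix.diag, Matrix.mul_apply]
  rw [hform, hform]
  let φ : II → II → II := fun p q => ((p.1.1, q.1.2), (p.2.1, q.2.2))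
  have hinv : Function.Involutive (fun x : II × II => (φ x.2 x.1, φ x.1 x.2)) := fun x => rfl
  exact Fintype.sum_equiv hinv.toPerm _ _ (fun x => rfl)

/-- trace of a product of PSD matrices is nonnegative -/
lemma trace_mul_psd_nonneg {n : Type*} [Fintype n] [DecidableEq n] {A B : Matrix n n ℂ}
    (hA : A.PosSemidef) (hB : B.PosSemidef) : 0 ≤ (A * B).trace := by
  obtain ⟨C, hC⟩ : ∃ C : Matrix _ _ ℂ, B = Cᴴ * C := by
    open scoped MatrixOrder in
    obtain ⟨C, hC⟩ := CStarAlgebra.nonneg_iff_eq_star_mul_self.mp hB.nonneg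
    exact ⟨C, hC⟩
  rw [hC, ← Matrix.mul_assoc, Matrix.trace_mul_cycle]
  have hpsd : (C * A * Cᴴ).PosSemidef := hA.mul_mul_conjTranspose_same C
  have hdiag : ∀ i, 0 ≤ (C * A * Cᴴ) i i := by
    intro i
    simpa [dotProduct, Matrix.mulVec, Pi.single_apply] using hpsd.dotProduct_mulVec_nonneg (Pi.single i 1)
  exact Finset.sum_nonneg fun i _ => hdiag i

end Aux

/-- No PPT measurement perfectly distinguishes the four states
`ψ₀⊗ψ₀, ψ₁⊗ψ₃, ψ₂⊗ψ₃, ψ₃⊗ψ₃`: the success probability is at most `7/8 < 1`. -/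
theorem ydy_ppt_indistinguishable
    (P : Fin 4 → Matrix ((Fin 2 × Fin 2) × (Fin 2 × Fin 2))
        ((Fin 2 × Fin 2) × (Fin 2 × Fin 2)) ℂ)
    (hP : ∀ j, (P j).PosSemidef) (hPT : ∀ j, (PT2 (P j)).PosSemidef)
    (hsum : ∑ j, P j = 1) :
    (1 / 4 : ℝ) * ∑ j, (Matrix.trace ((P j)ᴴ * ydy j)).re ≤ 7 / 8 ∧ (7 / 8 : ℝ) < 1 := by
  refine ⟨?_, by norm_num⟩
  set Z : Matrix II II ℂ := (1/4 : ℂ) • 1 - (1/2 : ℂ) • (bell 2 ⊗ₖ bell 1) with hZ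
  have half_nonneg : (0 : ℂ) ≤ 1/2 := by
    rw [Complex.le_def]; norm_num
  -- positive semidefiniteness of Z - PT2 (ydy j)
  have hD : ∀ j : Fin 4, (Z - PT2 (ydy j)).PosSemidef := by
    intro j
    fin_cases j
    · have he : Z - PT2 (ydy 0) =
          (1/2 : ℂ) • (bell 2 ⊗ₖ (1 - bell 2 - bell 1) + (1 - bell 2) ⊗ₖ bell 2) := by
        show Z - PT2 (bell 0 ⊗ₖ bell 0) = _
        rw [PT2_kron, PT_bell0, hZ]
        simp only [sub_kron, kron_sub, Matrix.add_kronecker, Matrix.kronecker_add,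
          Matrix.smul_kronecker, Matrix.kronecker_smul, Matrix.one_kronecker_one]
        module
      show (Z - PT2 (ydy 0)).PosSemidef
      rw [he]
      exact psd_smul (Matrix.PosSemidef.add
        (kron_psd (bell_psd 2) (one_sub_bell_sub_bell_psd 2 1 (by decide)))
        (kron_psd (one_sub_bell_psd 2) (bell_psd 2))) half_nonneg
    · have he : Z - PT2 (ydy 1) =
          (1/2 : ℂ) • (bell 3 ⊗ₖ (1 - bell 1) + (1 - bell 3 - bell 2) ⊗ₖ bell 1) := by
        show Z - PT2 (bell 1 ⊗ₖ bell 3) = _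
        rw [PT2_kron, PT_bell1, PT_bell3, hZ]
        simp only [sub_kron, kron_sub, Matrix.add_kronecker, Matrix.kronecker_add,
          Matrix.smul_kronecker, Matrix.kronecker_smul, Matrix.one_kronecker_one]
        module
      show (Z - PT2 (ydy 1)).PosSemidef
      rw [he]
      exact psd_smul (Matrix.PosSemidef.add
        (kron_psd (bell_psd 3) (one_sub_bell_psd 1))
        (kron_psd (one_sub_bell_sub_bell_psd 3 2 (by decide)) (bell_psd 1))) half_nonneg
    · have he : Z - PT2 (ydy 2) =
          (1/2 : ℂ) • (bell 0 ⊗ₖ (1 - bell 1) + (1 - bell 0 - bell 2) ⊗ₖ bell 1) := by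
        show Z - PT2 (bell 2 ⊗ₖ bell 3) = _
        rw [PT2_kron, PT_bell2, PT_bell3, hZ]
        simp only [sub_kron, kron_sub, Matrix.add_kronecker, Matrix.kronecker_add,
          Matrix.smul_kronecker, Matrix.kronecker_smul, Matrix.one_kronecker_one]
        module
      show (Z - PT2 (ydy 2)).PosSemidef
      rw [he]
      exact psd_smul (Matrix.PosSemidef.add
        (kron_psd (bell_psd 0) (one_sub_bell_psd 1))
        (kron_psd (one_sub_bell_sub_bell_psd 0 2 (by decide)) (bell_psd 1))) half_nonneg
    · have he : Z - PT2 (ydy 3) =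
          (1/2 : ℂ) • (bell 1 ⊗ₖ (1 - bell 1) + (1 - bell 1 - bell 2) ⊗ₖ bell 1) := by
        show Z - PT2 (bell 3 ⊗ₖ bell 3) = _
        rw [PT2_kron, PT_bell3, hZ]
        simp only [sub_kron, kron_sub, Matrix.add_kronecker, Matrix.kronecker_add,
          Matrix.smul_kronecker, Matrix.kronecker_smul, Matrix.one_kronecker_one]
        module
      show (Z - PT2 (ydy 3)).PosSemidef
      rw [he]
      exact psd_smul (Matrix.PosSemidef.add
        (kron_psd (bell_psd 1) (one_sub_bell_psd 1))
        (kron_psd (one_sub_bell_sub_bell_psd 1 2 (by decide)) (bell_psd 1))) half_nonneg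
  -- each term is bounded by the corresponding trace against Z
  have hterm : ∀ j : Fin 4, ((Matrix.trace ((P j)ᴴ * ydy j))).re ≤
      ((PT2 (P j) * Z).trace).re := by
    intro j
    have h1 : Matrix.trace ((P j)ᴴ * ydy j) = (PT2 (P j) * PT2 (ydy j)).trace := by
      rw [(hP j).1.eq, trace_PT2_mul]
    have h2 : (PT2 (P j) * Z).trace
        = (PT2 (P j) * PT2 (ydy j)).trace + (PT2 (P j) * (Z - PT2 (ydy j))).trace := by
      rw [← Matrix.trace_add, ← mul_add, add_sub_cancel]
    have h3 : 0 ≤ (PT2 (P j) * (Z - PT2 (ydy j))).trace :=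
      trace_mul_psd_nonneg (hPT j) (hD j)
    rw [Complex.le_def] at h3
    rw [h1, h2, Complex.add_re]
    simpa using h3.1
  -- summing up
  have hsumQ : ∑ j, PT2 (P j) = 1 := by
    rw [PT2_sum, hsum, PT2_one]
  have hZtrace : Z.trace = 7/2 := by
    rw [hZ, trace_sub, trace_smul, trace_smul, trace_one, trace_kronecker,
      trace_bell, trace_bell]
    norm_num [Fintype.card_prod]
  have hsumtr : ∑ j : Fin 4, ((PT2 (P j) * Z).trace).re = 7/2 := by
    rw [← Complex.re_sum, ← Matrix.trace_sum, ← Finset.sum_mul, hsumQ, one_mul, hZtrace]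
    norm_num
  have : ∑ j : Fin 4, (Matrix.trace ((P j)ᴴ * ydy j)).re ≤ 7/2 := by
    calc ∑ j : Fin 4, (Matrix.trace ((P j)ᴴ * ydy j)).re
        ≤ ∑ j : Fin 4, ((PT2 (P j) * Z).trace).re := Finset.sum_le_sum fun j _ => hterm j
      _ = 7/2 := hsumtr
  linarith
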